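/- arXiv:1410.1570 — 2 statements merged into one kernel-verified Lean document; each statement's English description precedes it below -/
import Mathlib

section
/- For every integer n ≥ 3 and every real α with 0 < α < 1, the sum over j from 2 to n-1 of binom(n,j) · (j-1)^((j-1)/α) · (n-j)^((n-j)/α) is at most (e/(1/α - 1)) · (3/2)^(1/α - 1) · n · (n-1)^((n-1)/α). -/
open Finset Real

private lemma helperA (a b m : ℕ) (ha : 1 ≤ a) (hab : a ≤ b) (hm : a + b = m) :
    (a:ℝ)^a * (b:ℝ)^b ≤ (m:ℝ)^m * Real.exp (-(Real.log 2 + 1/2) * a) := by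
  have hmpos : (0:ℝ) < (m:ℝ) := by
    have : 0 < m := by omega
    exact_mod_cast this
  have ham : (a:ℝ) ≤ (m:ℝ)/2 := by
    rw [le_div_iff₀ (by norm_num : (0:ℝ) < 2)]
    exact_mod_cast (by omega : a * 2 ≤ m)
  have c1 : (a:ℝ)^a ≤ ((m:ℝ)/2)^a := pow_le_pow_left₀ (Nat.cast_nonneg a) ham a
  have hba : (b:ℝ) = (m:ℝ) - (a:ℝ) := by
    have h : (a:ℝ) + (b:ℝ) = (m:ℝ) := by exact_mod_cast hm
    linarith
  have hbmeq : (b:ℝ)/(m:ℝ) = 1 - (a:ℝ)/(m:ℝ) := by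
    rw [hba]; field_simp
  have hbm : (b:ℝ)/(m:ℝ) ≤ Real.exp (-((a:ℝ)/(m:ℝ))) := by
    have h := Real.add_one_le_exp (-((a:ℝ)/(m:ℝ)))
    linarith
  have hbm0 : (0:ℝ) ≤ (b:ℝ)/(m:ℝ) := by positivity
  have c2a : ((b:ℝ)/(m:ℝ))^b ≤ Real.exp (-((a:ℝ)/(m:ℝ)))^b := pow_le_pow_left₀ hbm0 hbm b
  have c2b : Real.exp (-((a:ℝ)/(m:ℝ)))^b = Real.exp (-((a:ℝ)*(b:ℝ)/(m:ℝ))) := by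
    rw [← Real.exp_nat_mul]; congr 1; ring
  have c2c : Real.exp (-((a:ℝ)*(b:ℝ)/(m:ℝ))) ≤ Real.exp (-((a:ℝ)/2)) := by
    apply Real.exp_le_exp.mpr
    have h1 : (m:ℝ) ≤ 2*(b:ℝ) := by exact_mod_cast (by omega : m ≤ 2*b)
    have h2 : (a:ℝ)/2 ≤ (a:ℝ)*(b:ℝ)/(m:ℝ) := by
      rw [div_le_div_iff₀ (by norm_num : (0:ℝ) < 2) hmpos]
      nlinarith [show (0:ℝ) ≤ (a:ℝ) from Nat.cast_nonneg a]
    linarith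
  have c2 : (b:ℝ)^b ≤ (m:ℝ)^b * Real.exp (-((a:ℝ)/2)) := by
    have e1 : (b:ℝ)^b = ((b:ℝ)/(m:ℝ))^b * (m:ℝ)^b := by
      rw [div_pow]; field_simp
    rw [e1, mul_comm ((m:ℝ)^b) _]
    exact mul_le_mul_of_nonneg_right (le_trans c2a (c2b ▸ c2c)) (by positivity)
  have cexp : Real.exp (-(Real.log 2 + 1/2) * (a:ℝ)) = (1/2:ℝ)^a * Real.exp (-((a:ℝ)/2)) := by
    rw [mul_comm, Real.exp_nat_mul]
    have h1 : Real.exp (-(Real.log 2 + 1/2)) = (1/2:ℝ) * Real.exp (-(1/2:ℝ)) := by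
      rw [show -(Real.log 2 + 1/2) = -Real.log 2 + -(1/2:ℝ) by ring, Real.exp_add,
        Real.exp_neg, Real.exp_log (by norm_num : (0:ℝ) < 2)]
      norm_num
    rw [h1, mul_pow, ← Real.exp_nat_mul]
    congr 1
    ring
  calc (a:ℝ)^a * (b:ℝ)^b ≤ ((m:ℝ)/2)^a * ((m:ℝ)^b * Real.exp (-((a:ℝ)/2))) := by
        apply mul_le_mul c1 c2 (by positivity) (by positivity)
    _ = (m:ℝ)^m * ((1/2:ℝ)^a * Real.exp (-((a:ℝ)/2))) := by
        rw [div_pow, ← hm, pow_add]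
        field_simp
        rw [← mul_pow]; norm_num
    _ = (m:ℝ)^m * Real.exp (-(Real.log 2 + 1/2) * (a:ℝ)) := by rw [cexp]

private lemma keyP (a b m : ℕ) (ha : 1 ≤ a) (hb : 1 ≤ b) (hm : a + b = m) :
    (a:ℝ)^a * (b:ℝ)^b ≤ (m:ℝ)^m * Real.exp (-(Real.log 2 + 1/2) * (min a b : ℕ)) := by
  rcases le_total a b with h | h
  · rw [min_eq_left h]; exact helperA a b m ha h hm
  · rw [min_eq_right h, mul_comm ((a:ℝ)^a) _]
    exact helperA b a m hb h (by omega)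

private lemma binomB (a b m : ℕ) (hm : a + b = m) :
    (m.choose a : ℝ) * ((a:ℝ)^a * (b:ℝ)^b) ≤ (m:ℝ)^m := by
  have h := add_pow (a:ℝ) (b:ℝ) m
  have hmem : a ∈ Finset.range (m+1) := by simp; omega
  have hle : (a:ℝ)^a * (b:ℝ)^(m-a) * (m.choose a : ℝ) ≤
      ∑ k ∈ Finset.range (m+1), (a:ℝ)^k * (b:ℝ)^(m-k) * (m.choose k : ℝ) :=
    Finset.single_le_sum (f := fun k => (a:ℝ)^k * (b:ℝ)^(m-k) * (m.choose k : ℝ))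
      (fun k _ => by positivity) hmem
  rw [← h] at hle
  have hcast : ((a:ℝ)+(b:ℝ)) = (m:ℝ) := by exact_mod_cast hm
  have hma : m - a = b := by omega
  rw [hcast, hma] at hle
  linarith [hle]

set_option maxHeartbeats 1000000 in
theorem stmt_0 (n : ℕ) (hn : 3 ≤ n) (α : ℝ) (hα0 : 0 < α) (hα1 : α < 1) :
    ∑ j ∈ Finset.Icc 2 (n - 1),
        (n.choose j : ℝ) * ((j : ℝ) - 1) ^ (((j : ℝ) - 1) / α) *
          ((n : ℝ) - (j : ℝ)) ^ (((n : ℝ) - (j : ℝ)) / α)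
      ≤ (Real.exp 1 / (1 / α - 1)) * (3 / 2 : ℝ) ^ (1 / α - 1) * (n : ℝ) *
          ((n : ℝ) - 1) ^ (((n : ℝ) - 1) / α) := by
  have hβ : (1:ℝ) < 1/α := one_lt_one_div hα0 hα1
  set γ : ℝ := 1/α - 1 with hγdef
  have hγ : 0 < γ := by simp only [hγdef]; linarith
  set c : ℝ := Real.log 2 + 1/2 with hcdef
  have hc : 0 < c := by
    have := Real.log_pos (by norm_num : (1:ℝ) < 2)
    simp only [hcdef]; linarith
  set y : ℝ := Real.exp (-(c*γ)) with hydef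
  have hy0 : 0 < y := Real.exp_pos _
  have hy1 : y < 1 := by
    rw [hydef, Real.exp_lt_one_iff]
    nlinarith
  set m : ℕ := n - 1 with hmdef
  have hmcast : ((m:ℕ):ℝ) = (n:ℝ) - 1 := by
    rw [hmdef]
    push_cast [Nat.cast_sub (by omega : 1 ≤ n)]
    ring
  -- expansion of rpow
  have expand : ∀ k : ℕ, 1 ≤ k → (k:ℝ)^((k:ℝ)/α) = ((k:ℝ)^k) * (((k:ℝ)^k))^γ := by
    intro k hk
    have hk0 : (0:ℝ) < (k:ℝ)^k := by
      have : (0:ℝ) < (k:ℝ) := by exact_mod_cast hk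
      positivity
    rw [show (k:ℝ)/α = (k:ℝ) * (γ + 1) by rw [hγdef]; field_simp; ring,
      Real.rpow_mul (Nat.cast_nonneg k), Real.rpow_natCast,
      Real.rpow_add hk0, Real.rpow_one]
    ring
  set M : ℝ := ((n:ℝ)-1)^(((n:ℝ)-1)/α) with hMdef
  have hMeq : M = (m:ℝ)^m * ((m:ℝ)^m)^γ := by
    rw [hMdef, ← hmcast, expand m (by omega)]
  have hM0 : 0 ≤ M := Real.rpow_nonneg (by
    have : (2:ℝ) ≤ (n:ℝ) := by exact_mod_cast (by omega : 2 ≤ n)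
    linarith) _
  -- termwise bound
  have key : ∀ j ∈ Finset.Icc 2 (n-1),
      (n.choose j : ℝ) * ((j : ℝ) - 1) ^ (((j : ℝ) - 1) / α) *
          ((n : ℝ) - (j : ℝ)) ^ (((n : ℝ) - (j : ℝ)) / α)
        ≤ (n:ℝ) * M * (y^(j-1) + y^(n-j)) := by
    intro j hj
    rw [Finset.mem_Icc] at hj
    obtain ⟨hj2, hjn⟩ := hj
    set a := j - 1 with hadef
    set b := n - j with hbdef
    have ha1 : 1 ≤ a := by omega
    have hb1 : 1 ≤ b := by omega
    have hab : a + b = m := by omega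
    have hcasta : ((j:ℝ)-1) = (a:ℝ) := by
      rw [hadef]; push_cast [Nat.cast_sub (by omega : 1 ≤ j)]; ring
    have hcastb : ((n:ℝ)-(j:ℝ)) = (b:ℝ) := by
      rw [hbdef]; push_cast [Nat.cast_sub (by omega : j ≤ n)]; ring
    rw [hcasta, hcastb, expand a ha1, expand b hb1]
    set A : ℝ := (a:ℝ)^a with hAdef
    set B : ℝ := (b:ℝ)^b with hBdef
    have hA0 : (0:ℝ) ≤ A := by positivity
    have hB0 : (0:ℝ) ≤ B := by positivity
    -- choose bound
    have hch : (n.choose j : ℝ) ≤ (n:ℝ) * (m.choose a : ℝ) := by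
      have hnat : n.choose j ≤ n * m.choose a := by
        calc n.choose j ≤ n.choose j * j := Nat.le_mul_of_pos_right _ (by omega)
          _ = n * m.choose a := by
              rw [show j = a + 1 by omega, show n = m + 1 by omega]
              exact (Nat.add_one_mul_choose_eq m a).symm
      exact_mod_cast hnat
    have hbin : (m.choose a : ℝ) * (A * B) ≤ (m:ℝ)^m := binomB a b m hab
    -- rpow bound of A*B
    have hPQ : A * B ≤ (m:ℝ)^m * Real.exp (-c * (min a b : ℕ)) := keyP a b m ha1 hb1 hab
    have h3a : (A*B)^γ ≤ ((m:ℝ)^m * Real.exp (-c * (min a b : ℕ)))^γ :=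
      Real.rpow_le_rpow (by positivity) hPQ hγ.le
    have h3b : ((m:ℝ)^m * Real.exp (-c * (min a b : ℕ)))^γ
        = ((m:ℝ)^m)^γ * Real.exp (-c * (min a b : ℕ) * γ) := by
      rw [Real.mul_rpow (by positivity) (Real.exp_pos _).le,
        ← Real.exp_one_rpow (-c * (min a b : ℕ)), ← Real.rpow_mul (Real.exp_pos 1).le,
        Real.exp_one_rpow]
    have h3c : Real.exp (-c * (min a b : ℕ) * γ) = y^(min a b) := by
      rw [hydef, ← Real.exp_nat_mul]
      congr 1
      ring
    have h3d : (y:ℝ)^(min a b) ≤ y^a + y^b := by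
      rcases le_total a b with h | h
      · rw [min_eq_left h]
        have : (0:ℝ) ≤ y^b := by positivity
        linarith
      · rw [min_eq_right h]
        have : (0:ℝ) ≤ y^a := by positivity
        linarith
    have h3 : (A*B)^γ ≤ ((m:ℝ)^m)^γ * (y^a + y^b) := by
      calc (A*B)^γ ≤ ((m:ℝ)^m)^γ * Real.exp (-c * (min a b : ℕ) * γ) := by
            rw [← h3b]; exact h3a
        _ = ((m:ℝ)^m)^γ * y^(min a b) := by rw [h3c]
        _ ≤ ((m:ℝ)^m)^γ * (y^a + y^b) := by
            apply mul_le_mul_of_nonneg_left h3d (Real.rpow_nonneg (by positivity) _)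
    have hn0 : (0:ℝ) ≤ (n:ℝ) := Nat.cast_nonneg n
    have hABγ0 : (0:ℝ) ≤ (A*B)^γ := Real.rpow_nonneg (by positivity) _
    calc (n.choose j : ℝ) * (A * A^γ) * (B * B^γ)
        = (n.choose j : ℝ) * (A*B) * (A*B)^γ := by
          rw [Real.mul_rpow hA0 hB0]; ring
      _ ≤ ((n:ℝ) * (m.choose a : ℝ)) * (A*B) * (A*B)^γ := by
          apply mul_le_mul_of_nonneg_right _ hABγ0
          exact mul_le_mul_of_nonneg_right hch (by positivity)
      _ = (n:ℝ) * ((m.choose a : ℝ) * (A*B)) * (A*B)^γ := by ring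
      _ ≤ (n:ℝ) * (m:ℝ)^m * (A*B)^γ := by
          apply mul_le_mul_of_nonneg_right _ hABγ0
          exact mul_le_mul_of_nonneg_left hbin hn0
      _ ≤ (n:ℝ) * (m:ℝ)^m * (((m:ℝ)^m)^γ * (y^a + y^b)) := by
          apply mul_le_mul_of_nonneg_left h3 (by positivity)
      _ = (n:ℝ) * M * (y^a + y^b) := by rw [hMeq]; ring
  -- sum of geometric tails
  have hIcc : Finset.Icc 2 (n-1) = Finset.Ico 2 n := by
    rw [← Finset.Ico_add_one_right_eq_Icc]
    congr 1
    omega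
  have h1 : ∑ j ∈ Finset.Icc 2 (n-1), y^(j-1) = ∑ i ∈ Finset.range (n-2), y^(i+1) := by
    rw [hIcc, Finset.sum_Ico_eq_sum_range]
    apply Finset.sum_congr rfl
    intro i _
    congr 1
    omega
  have h2 : ∑ j ∈ Finset.Icc 2 (n-1), y^(n-j) = ∑ j ∈ Finset.Icc 2 (n-1), y^(j-1) := by
    apply Finset.sum_nbij' (fun j => n+1-j) (fun j => n+1-j)
    · intro x hx; rw [Finset.mem_Icc] at *; omega
    · intro x hx; rw [Finset.mem_Icc] at *; omega
    · intro x hx; rw [Finset.mem_Icc] at hx; omega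
    · intro x hx; rw [Finset.mem_Icc] at hx; omega
    · intro x hx; rw [Finset.mem_Icc] at hx; congr 1; omega
  have hS : ∑ i ∈ Finset.range (n-2), y^(i+1) ≤ y/(1-y) := by
    have hg : (∑ i ∈ Finset.range (n-2), y^i) * (y - 1) = y^(n-2) - 1 := geom_sum_mul y (n-2)
    have he : ∑ i ∈ Finset.range (n-2), y^(i+1) = y * ∑ i ∈ Finset.range (n-2), y^i := by
      rw [Finset.mul_sum]
      exact Finset.sum_congr rfl fun i _ => pow_succ' y i
    have h01 : 0 < 1 - y := by linarith
    rw [he, le_div_iff₀ h01]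
    have hpow : 0 ≤ y^(n-2) := by positivity
    nlinarith [hg]
  have hgeo : y/(1-y) ≤ 1/(c*γ) := by
    have h01 : 0 < 1 - y := by linarith
    rw [div_le_div_iff₀ h01 (by positivity)]
    have h := Real.add_one_le_exp (c*γ)
    have hey : y * Real.exp (c*γ) = 1 := by
      rw [hydef, ← Real.exp_add]
      simp
    nlinarith [mul_le_mul_of_nonneg_left h hy0.le]
  have hce : 2/(c*γ) ≤ Real.exp 1 / γ := by
    rw [div_le_div_iff₀ (by positivity) hγ]
    have he1 : (2.7182818283:ℝ) < Real.exp 1 := Real.exp_one_gt_d9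
    have hl2 : (0.6931471803:ℝ) < Real.log 2 := Real.log_two_gt_d9
    have hc' : (1.19:ℝ) ≤ c := by rw [hcdef]; nlinarith
    have h2c : (2:ℝ) ≤ Real.exp 1 * c := by
      calc (2:ℝ) ≤ 2.7182818283 * 1.19 := by norm_num
        _ ≤ Real.exp 1 * c := mul_le_mul he1.le hc' (by norm_num)
            (by positivity : (0:ℝ) ≤ Real.exp 1)
    nlinarith [mul_le_mul_of_nonneg_right h2c hγ.le]
  have hsum : ∑ j ∈ Finset.Icc 2 (n-1), (y^(j-1) + y^(n-j)) ≤ Real.exp 1 / γ := by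
    rw [Finset.sum_add_distrib, h2, h1]
    calc (∑ i ∈ Finset.range (n-2), y^(i+1)) + (∑ i ∈ Finset.range (n-2), y^(i+1))
        ≤ y/(1-y) + y/(1-y) := by linarith
      _ = 2*(y/(1-y)) := by ring
      _ ≤ 2*(1/(c*γ)) := by linarith [hgeo]
      _ = 2/(c*γ) := by ring
      _ ≤ Real.exp 1 / γ := hce
  calc ∑ j ∈ Finset.Icc 2 (n - 1),
        (n.choose j : ℝ) * ((j : ℝ) - 1) ^ (((j : ℝ) - 1) / α) *
          ((n : ℝ) - (j : ℝ)) ^ (((n : ℝ) - (j : ℝ)) / α)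
      ≤ ∑ j ∈ Finset.Icc 2 (n-1), (n:ℝ) * M * (y^(j-1) + y^(n-j)) := Finset.sum_le_sum key
    _ = (n:ℝ) * M * ∑ j ∈ Finset.Icc 2 (n-1), (y^(j-1) + y^(n-j)) := by
        rw [Finset.mul_sum]
    _ ≤ (n:ℝ) * M * (Real.exp 1 / γ) := by
        apply mul_le_mul_of_nonneg_left hsum (mul_nonneg (Nat.cast_nonneg n) hM0)
    _ ≤ (Real.exp 1 / γ) * (3/2:ℝ)^γ * (n:ℝ) * M := by
        have h32 : (1:ℝ) ≤ (3/2:ℝ)^γ := by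
          rw [show (1:ℝ) = (3/2:ℝ)^(0:ℝ) by rw [Real.rpow_zero]]
          exact Real.rpow_le_rpow_of_exponent_le (by norm_num) hγ.le
        calc (n:ℝ) * M * (Real.exp 1 / γ)
            = (Real.exp 1 / γ) * (n:ℝ) * M * 1 := by ring
          _ ≤ (Real.exp 1 / γ) * (n:ℝ) * M * ((3/2:ℝ)^γ) := by
              apply mul_le_mul_of_nonneg_left h32
                (mul_nonneg (mul_nonneg (by positivity) (Nat.cast_nonneg n)) hM0)
          _ = (Real.exp 1 / γ) * (3/2:ℝ)^γ * (n:ℝ) * M := by ring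
end

section
/- Let 0 < α < 1 and let f : ℝ → ℝ be a C¹ function with bounded derivative and f itself bounded. Then for every δ > 0 and every x ∈ ℝ, the absolute value of the principal-value integral ∫ sgn(x−y) |x−y|^{−(1+α)} (f(x) − f(y)) dy over ℝ is at most (6/α) δ^{−α} ‖f‖_∞ + (2/(α(1−α))) δ^{1−α} ‖f′‖_∞. -/
open Real MeasureTheory

set_option maxHeartbeats 1000000 in
theorem stmt_1 (α : ℝ) (hα0 : 0 < α) (hα1 : α < 1) (f : ℝ → ℝ)
    (hf : ContDiff ℝ 1 f) (C C' : ℝ)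
    (hC : ∀ x, |f x| ≤ C) (hC' : ∀ x, |deriv f x| ≤ C')
    (δ : ℝ) (hδ : 0 < δ) (x : ℝ) :
    |∫ y : ℝ, Real.sign (x - y) * |x - y| ^ (-(1 + α)) * (f x - f y)|
      ≤ 6 / α * δ ^ (-α) * C + 2 / (α * (1 - α)) * δ ^ (1 - α) * C' := by
  have hC0 : 0 ≤ C := le_trans (abs_nonneg _) (hC 0)
  have hC'0 : 0 ≤ C' := le_trans (abs_nonneg _) (hC' 0)
  -- Lipschitz bound
  have hlip : ∀ a b : ℝ, |f a - f b| ≤ C' * |a - b| := by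
    intro a b
    have := (convex_univ : Convex ℝ (Set.univ : Set ℝ)).norm_image_sub_le_of_norm_deriv_le
      (f := f) (fun t _ => (hf.differentiable one_ne_zero t))
      (fun t _ => by simpa [Real.norm_eq_abs] using hC' t)
      (Set.mem_univ b) (Set.mem_univ a)
    simpa [Real.norm_eq_abs] using this
  -- the bounding function
  set B : ℝ → ℝ := fun t => if t ≤ δ then C' * t ^ (-α) else 2 * C * t ^ (-(1 + α)) with hB
  have hBnonneg : ∀ t : ℝ, 0 ≤ t → 0 ≤ B t := by
    intro t ht
    by_cases h : t ≤ δ <;> simp only [hB, h, if_true, if_false]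
    · exact mul_nonneg hC'0 (Real.rpow_nonneg ht _)
    · exact mul_nonneg (by linarith) (Real.rpow_nonneg ht _)
  -- pointwise bound
  have hpt : ∀ y : ℝ,
      ‖Real.sign (x - y) * |x - y| ^ (-(1 + α)) * (f x - f y)‖ ≤ B |x - y| := by
    intro y
    rcases eq_or_ne y x with rfl | hyx
    · simpa using hBnonneg 0 le_rfl
    have ht0 : 0 < |x - y| := abs_pos.mpr (sub_ne_zero.mpr (Ne.symm hyx))
    have hsign : |Real.sign (x - y)| ≤ 1 := by
      rcases Real.sign_apply_eq (x - y) with h | h | h <;> simp [h]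
    have hbase : ‖Real.sign (x - y) * |x - y| ^ (-(1 + α)) * (f x - f y)‖
        ≤ |x - y| ^ (-(1 + α)) * |f x - f y| := by
      rw [Real.norm_eq_abs, abs_mul, abs_mul,
        abs_of_nonneg (Real.rpow_nonneg (abs_nonneg _) _)]
      calc |Real.sign (x - y)| * |x - y| ^ (-(1 + α)) * |f x - f y|
          ≤ 1 * (|x - y| ^ (-(1 + α)) * |f x - f y|) := by
            rw [mul_assoc]
            exact mul_le_mul_of_nonneg_right hsign
              (mul_nonneg (Real.rpow_nonneg (abs_nonneg _) _) (abs_nonneg _))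
        _ = |x - y| ^ (-(1 + α)) * |f x - f y| := one_mul _
    by_cases hle : |x - y| ≤ δ
    · simp only [hB, hle, if_true]
      refine hbase.trans ?_
      have : |x - y| ^ (-(1 + α)) * |f x - f y|
          ≤ |x - y| ^ (-(1 + α)) * (C' * |x - y|) := by
        exact mul_le_mul_of_nonneg_left (hlip x y) (Real.rpow_nonneg (abs_nonneg _) _)
      refine this.trans (le_of_eq ?_)
      rw [show -α = -(1 + α) + 1 by ring, Real.rpow_add ht0, Real.rpow_one]
      ring
    · simp only [hB, hle, if_false]
      refine hbase.trans ?_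
      have h2C : |f x - f y| ≤ 2 * C := by
        calc |f x - f y| ≤ |f x| + |f y| := abs_sub _ _
          _ ≤ C + C := add_le_add (hC x) (hC y)
          _ = 2 * C := by ring
      calc |x - y| ^ (-(1 + α)) * |f x - f y|
          ≤ |x - y| ^ (-(1 + α)) * (2 * C) :=
            mul_le_mul_of_nonneg_left h2C (Real.rpow_nonneg (abs_nonneg _) _)
        _ = 2 * C * |x - y| ^ (-(1 + α)) := by ring
  -- integrability of B on Ioi 0
  have hint1 : IntegrableOn (fun t : ℝ => C' * t ^ (-α)) (Set.Ioc 0 δ) := by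
    exact (intervalIntegral.intervalIntegrable_rpow' (a := 0) (b := δ) (r := -α)
      (by linarith)).1.const_mul C'
  have hint2 : IntegrableOn (fun t : ℝ => 2 * C * t ^ (-(1 + α))) (Set.Ioi δ) := by
    exact (integrableOn_Ioi_rpow_of_lt (by linarith) hδ).const_mul _
  have hIoi_eq : Set.Ioi (0 : ℝ) = Set.Ioc 0 δ ∪ Set.Ioi δ := by
    rw [Set.Ioc_union_Ioi_eq_Ioi hδ.le]
  have hBeq1 : Set.EqOn B (fun t : ℝ => C' * t ^ (-α)) (Set.Ioc 0 δ) := by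
    intro t ht; simp only [hB, ht.2, if_true]
  have hBeq2 : Set.EqOn B (fun t : ℝ => 2 * C * t ^ (-(1 + α))) (Set.Ioi δ) := by
    intro t ht; simp only [hB, not_le.mpr (Set.mem_Ioi.mp ht), if_false]
  have hBint1 : IntegrableOn B (Set.Ioc 0 δ) :=
    (hint1.congr_fun hBeq1.symm measurableSet_Ioc)
  have hBint2 : IntegrableOn B (Set.Ioi δ) :=
    (hint2.congr_fun hBeq2.symm measurableSet_Ioi)
  have hBintIoi : IntegrableOn B (Set.Ioi 0) := by
    rw [hIoi_eq]; exact hBint1.union hBint2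
  -- value of integral of B over Ioi 0
  have hval1 : ∫ t in Set.Ioc 0 δ, B t = C' * (δ ^ (1 - α) / (1 - α)) := by
    rw [setIntegral_congr_fun measurableSet_Ioc hBeq1]
    rw [integral_const_mul]
    congr 1
    have := integral_rpow (a := 0) (b := δ) (r := -α) (Or.inl (by linarith))
    rw [intervalIntegral.integral_of_le hδ.le] at this
    rw [this]
    rw [Real.zero_rpow (by linarith)]
    ring_nf
  have hval2 : ∫ t in Set.Ioi δ, B t = 2 * C * (δ ^ (-α) / α) := by
    rw [setIntegral_congr_fun measurableSet_Ioi hBeq2]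
    rw [integral_const_mul]
    congr 1
    rw [integral_Ioi_rpow_of_lt (by linarith) hδ]
    have : -(1 + α) + 1 = -α := by ring
    rw [this]
    rw [div_eq_div_iff (by linarith) (by positivity)]
    ring
  have hvalIoi : ∫ t in Set.Ioi (0:ℝ), B t
      = C' * (δ ^ (1 - α) / (1 - α)) + 2 * C * (δ ^ (-α) / α) := by
    rw [hIoi_eq, setIntegral_union (Set.Ioc_disjoint_Ioi le_rfl) measurableSet_Ioi hBint1 hBint2,
      hval1, hval2]
  -- integrability and value of y ↦ B |x - y|
  have hintabs : Integrable (fun y : ℝ => B |y|) := by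
    have h1 : IntegrableOn (fun y : ℝ => B |y|) (Set.Ioi 0) := by
      refine hBintIoi.congr_fun (fun t ht => ?_) measurableSet_Ioi
      rw [abs_of_pos (Set.mem_Ioi.mp ht)]
    have h2 : IntegrableOn (fun y : ℝ => B |y|) (Set.Iic 0) := by
      rw [← Measure.map_neg_eq_self (volume : Measure ℝ)]
      have m : MeasurableEmbedding fun y : ℝ => -y :=
        (Homeomorph.neg ℝ).measurableEmbedding
      rw [m.integrableOn_map_iff]
      have e1 : ((fun y : ℝ => B |y|) ∘ fun y : ℝ => -y) = fun y : ℝ => B |y| := by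
        funext y; simp [Function.comp, abs_neg]
      have e2 : ((fun y : ℝ => -y) ⁻¹' Set.Iic 0) = Set.Ici 0 := by
        ext z; simp
      rw [e1, e2]
      exact Iff.mpr integrableOn_Ici_iff_integrableOn_Ioi h1
    have := h2.union h1
    rwa [Set.Iic_union_Ioi, integrableOn_univ] at this
  have hintcomp : Integrable (fun y : ℝ => B |x - y|) := by
    exact (integrable_comp_sub_left (fun y : ℝ => B |y|) x).mpr hintabs
  have hvalcomp : ∫ y : ℝ, B |x - y| = 2 * ∫ t in Set.Ioi (0:ℝ), B t := by
    rw [integral_sub_left_eq_self (fun y : ℝ => B |y|) volume x]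
    exact integral_comp_abs (f := B)
  -- put it together
  calc |∫ y : ℝ, Real.sign (x - y) * |x - y| ^ (-(1 + α)) * (f x - f y)|
      ≤ ∫ y : ℝ, ‖Real.sign (x - y) * |x - y| ^ (-(1 + α)) * (f x - f y)‖ := by
        rw [← Real.norm_eq_abs]
        exact norm_integral_le_integral_norm _
    _ ≤ ∫ y : ℝ, B |x - y| := by
        refine integral_mono_of_nonneg (Filter.Eventually.of_forall fun y => norm_nonneg _)
          hintcomp (Filter.Eventually.of_forall hpt)
    _ = 2 * (C' * (δ ^ (1 - α) / (1 - α)) + 2 * C * (δ ^ (-α) / α)) := by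
        rw [hvalcomp, hvalIoi]
    _ ≤ 6 / α * δ ^ (-α) * C + 2 / (α * (1 - α)) * δ ^ (1 - α) * C' := by
        have hd : 0 ≤ δ ^ (-α) := Real.rpow_nonneg hδ.le _
        have hd' : 0 ≤ δ ^ (1 - α) := Real.rpow_nonneg hδ.le _
        have h1 : 2 * (C' * (δ ^ (1 - α) / (1 - α))) ≤ 2 / (α * (1 - α)) * δ ^ (1 - α) * C' := by
          have hinv : 1 / (1 - α) ≤ 1 / (α * (1 - α)) := by
            rw [div_le_div_iff₀ (by linarith) (by nlinarith)]
            nlinarith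
          calc 2 * (C' * (δ ^ (1 - α) / (1 - α))) = 2 * C' * δ ^ (1 - α) * (1 / (1 - α)) := by
                ring
            _ ≤ 2 * C' * δ ^ (1 - α) * (1 / (α * (1 - α))) := by
                apply mul_le_mul_of_nonneg_left hinv
                exact mul_nonneg (mul_nonneg (by norm_num) hC'0) hd'
            _ = 2 / (α * (1 - α)) * δ ^ (1 - α) * C' := by ring
        have h2 : 2 * (2 * C * (δ ^ (-α) / α)) ≤ 6 / α * δ ^ (-α) * C := by
          calc 2 * (2 * C * (δ ^ (-α) / α)) = 4 / α * δ ^ (-α) * C := by ring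
            _ ≤ 6 / α * δ ^ (-α) * C := by
                apply mul_le_mul_of_nonneg_right _ hC0
                apply mul_le_mul_of_nonneg_right _ hd
                rw [div_le_div_iff₀ hα0 hα0]; nlinarith
        linarith
end
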